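/- arXiv:2109.01022 — 2 statements merged into one kernel-verified Lean document; each statement's English description precedes it below -/
import Mathlib

section
/- Let R ∈ SO(2) with R ≠ Id and R ≠ −Id. Then a matrix F ∈ ℝ^{2×2} satisfies F R^k ∈ 𝓝 for every natural number k ≥ 0 if and only if F ∈ SO(2); that is, ⋂_{k=0}^{∞} 𝓝 (R^k)ᵀ = SO(2). -/
open Matrix Real Set MeasureTheory

noncomputable section

/-- The space of real 2×2 matrices. -/
abbrev M2 : Type := Matrix (Fin 2) (Fin 2) ℝ

/-- Euclidean norm on ℝ². -/
def enorm2 (v : Fin 2 → ℝ) : ℝ := Real.sqrt ((v 0) ^ 2 + (v 1) ^ 2)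

/-- Rotation matrix by angle θ. -/
def rot (θ : ℝ) : M2 := !![Real.cos θ, -Real.sin θ; Real.sin θ, Real.cos θ]

/-- The set of rotations SO(2). -/
def SO2 : Set M2 := {R : M2 | ∃ θ : ℝ, R = rot θ}

def e1 : Fin 2 → ℝ := ![1, 0]
def e2 : Fin 2 → ℝ := ![0, 1]

/-- Perpendicular vector w⊥ = (−w₂, w₁). -/
def perp (w : Fin 2 → ℝ) : Fin 2 → ℝ := ![-(w 1), w 0]

/-- 𝓜_s = {F : det F = 1 and ‖F s‖ = 1}. -/
def calM (s : Fin 2 → ℝ) : Set M2 := {F : M2 | F.det = 1 ∧ enorm2 (F.mulVec s) = 1}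

/-- 𝓝_s = {F : det F = 1 and ‖F s‖ ≤ 1}. -/
def calN (s : Fin 2 → ℝ) : Set M2 := {F : M2 | F.det = 1 ∧ enorm2 (F.mulVec s) ≤ 1}

lemma rot_mul (a b : ℝ) : rot a * rot b = rot (a + b) := by
  ext i j
  fin_cases i <;> fin_cases j <;>
    simp [rot, Matrix.mul_apply, Fin.sum_univ_two, Real.cos_add, Real.sin_add] <;> ring

lemma rot_pow (θ : ℝ) (k : ℕ) : rot θ ^ k = rot (k * θ) := by
  induction k with
  | zero =>
    simp only [pow_zero, Nat.cast_zero, zero_mul]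
    ext i j
    fin_cases i <;> fin_cases j <;> simp [rot, Matrix.one_apply]
  | succ n ih =>
    rw [pow_succ, ih, rot_mul]
    push_cast
    ring_nf

lemma det_rot (θ : ℝ) : (rot θ).det = 1 := by
  simp [rot, Matrix.det_fin_two_of]
  nlinarith [Real.sin_sq_add_cos_sq θ]

lemma rot_mulVec_e1 (θ : ℝ) : (rot θ).mulVec e1 = ![Real.cos θ, Real.sin θ] := by
  ext i
  fin_cases i <;> simp [rot, e1, Matrix.mulVec, dotProduct, Fin.sum_univ_two]

lemma sum_bound (α D C : ℝ) (hz : Complex.exp (α * Complex.I) ≠ 1) (n : ℕ) :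
    |∑ k ∈ Finset.range n, (D * Real.cos (k*α) + C * Real.sin (k*α))|
      ≤ ‖(D:ℂ) - C*Complex.I‖ * 2 / ‖Complex.exp (α*Complex.I) - 1‖ := by
  set z : ℂ := Complex.exp (α * Complex.I) with hzdef
  set w : ℂ := (D:ℂ) - C*Complex.I with hwdef
  have hzk : ∀ k : ℕ, z ^ k = Complex.exp (((k*α : ℝ)) * Complex.I) := by
    intro k
    rw [← Complex.exp_nat_mul]
    push_cast
    ring_nf
  have hterm : ∀ k : ℕ, D * Real.cos (k*α) + C * Real.sin (k*α) = (w * z ^ k).re := by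
    intro k
    rw [hzk k, Complex.mul_re, Complex.exp_ofReal_mul_I_re, Complex.exp_ofReal_mul_I_im]
    have hre : w.re = D := by simp [hwdef]
    have him : w.im = -C := by simp [hwdef]
    rw [hre, him]
    ring
  have hsum : ∑ k ∈ Finset.range n, (D * Real.cos (k*α) + C * Real.sin (k*α))
      = (w * ∑ k ∈ Finset.range n, z ^ k).re := by
    rw [Finset.mul_sum, Complex.re_sum]
    exact Finset.sum_congr rfl fun k _ => hterm k
  rw [hsum]
  have h2 : ‖z ^ n - 1‖ ≤ 2 := by
    calc ‖z ^ n - 1‖ ≤ ‖z ^ n‖ + ‖(1:ℂ)‖ :=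
          norm_sub_le _ _
      _ ≤ 2 := by
          rw [norm_pow]
          have : ‖z‖ = 1 := Complex.norm_exp_ofReal_mul_I α
          rw [this, one_pow, norm_one]; norm_num
  calc |(w * ∑ k ∈ Finset.range n, z ^ k).re|
      ≤ ‖w * ∑ k ∈ Finset.range n, z ^ k‖ := Complex.abs_re_le_norm _
    _ = ‖w‖ * ‖∑ k ∈ Finset.range n, z ^ k‖ := norm_mul _ _
    _ ≤ ‖w‖ * 2 / ‖z - 1‖ := by
        rw [geom_sum_eq hz, norm_div, mul_div_assoc]
        gcongr

/-- For R ∈ SO(2) with R ≠ ±Id, ⋂_{k=0}^∞ 𝓝 (R^k)ᵀ = SO(2). -/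
theorem stmt11 (R : M2) (hR : R ∈ SO2) (h1 : R ≠ 1) (h2 : R ≠ -1) :
    {F : M2 | ∀ k : ℕ, F * R ^ k ∈ calN e1} = SO2 := by
  obtain ⟨θ, rfl⟩ := hR
  have hsin : Real.sin θ ≠ 0 := by
    intro hs0
    have hcs := Real.sin_sq_add_cos_sq θ
    have hfac : (Real.cos θ - 1) * (Real.cos θ + 1) = 0 := by nlinarith
    rcases mul_eq_zero.mp hfac with hc | hc
    · apply h1
      have hc1 : Real.cos θ = 1 := by linarith
      ext i j
      fin_cases i <;> fin_cases j <;> simp [rot, hs0, hc1, Matrix.one_apply]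
    · apply h2
      have hc1 : Real.cos θ = -1 := by linarith
      ext i j
      fin_cases i <;> fin_cases j <;>
        simp [rot, hs0, hc1, Matrix.neg_apply, Matrix.one_apply]
  have hzne : Complex.exp ((2*θ : ℝ) * Complex.I) ≠ 1 := by
    intro hz
    have hre : Real.cos (2*θ) = 1 := by
      have h := congrArg Complex.re hz
      rw [Complex.exp_ofReal_mul_I_re] at h
      simpa using h
    have h2m := Real.cos_two_mul θ
    have hcs := Real.sin_sq_add_cos_sq θ
    have : Real.sin θ ^ 2 = 0 := by nlinarith
    exact hsin (by nlinarith [sq_nonneg (Real.sin θ)])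
  ext F
  simp only [Set.mem_setOf_eq]
  constructor
  · intro h
    obtain ⟨p, q, r, s, hF⟩ : ∃ p q r s, F = !![p, q; r, s] :=
      ⟨_, _, _, _, Matrix.eta_fin_two F⟩
    subst hF
    have hdet : p * s - q * r = 1 := by
      have h0 := (h 0).1
      rw [pow_zero, mul_one, Matrix.det_fin_two_of] at h0
      exact h0
    have hineq : ∀ k : ℕ,
        (p * Real.cos (k*θ) + q * Real.sin (k*θ))^2
          + (r * Real.cos (k*θ) + s * Real.sin (k*θ))^2 ≤ 1 := by
      intro k
      have hk := (h k).2
      rw [rot_pow] at hk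
      have hmv : ((!![p, q; r, s] : M2) * rot (k*θ)).mulVec e1
          = ![p * Real.cos (k*θ) + q * Real.sin (k*θ),
              r * Real.cos (k*θ) + s * Real.sin (k*θ)] := by
        ext i
        fin_cases i <;>
          simp [rot, e1, Matrix.mul_apply, Matrix.mulVec, dotProduct,
            Fin.sum_univ_two] <;> ring
      rw [hmv] at hk
      unfold enorm2 at hk
      simp only [Matrix.cons_val_zero, Matrix.cons_val_one, Matrix.head_cons] at hk
      have hnn : (0:ℝ) ≤ (p * Real.cos (k*θ) + q * Real.sin (k*θ))^2
          + (r * Real.cos (k*θ) + s * Real.sin (k*θ))^2 := by positivity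
      nlinarith [Real.sq_sqrt hnn, Real.sqrt_nonneg ((p * Real.cos (k*θ) + q * Real.sin (k*θ))^2
          + (r * Real.cos (k*θ) + s * Real.sin (k*θ))^2)]
    have key : ∀ k : ℕ,
        (p^2+r^2-q^2-s^2)/2 * Real.cos (k*(2*θ)) + (p*q+r*s) * Real.sin (k*(2*θ))
          ≤ 1 - (p^2+q^2+r^2+s^2)/2 := by
      intro k
      have ht : (k:ℝ)*(2*θ) = 2*((k:ℝ)*θ) := by ring
      rw [ht, Real.cos_two_mul, Real.sin_two_mul]
      have hpyth := Real.sin_sq_add_cos_sq ((k:ℝ)*θ)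
      have hexp : (p * Real.cos (k*θ) + q * Real.sin (k*θ))^2
            + (r * Real.cos (k*θ) + s * Real.sin (k*θ))^2
          = (p^2+r^2-q^2-s^2)*(Real.cos ((k:ℝ)*θ))^2 + (q^2+s^2)
            + 2*(p*q+r*s)*(Real.sin ((k:ℝ)*θ))*(Real.cos ((k:ℝ)*θ)) := by
        linear_combination (q^2+s^2) * hpyth
      nlinarith [hineq k, hexp]
    have hid : (p^2+r^2)*(q^2+s^2) = (p*q+r*s)^2 + 1 := by
      linear_combination (p*s - q*r + 1) * hdet
    have hge : p^2+q^2+r^2+s^2 ≥ 2 := by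
      nlinarith [sq_nonneg (p-s), sq_nonneg (q+r), hdet]
    have hle : p^2+q^2+r^2+s^2 ≤ 2 := by
      by_contra hlt
      push_neg at hlt
      set D : ℝ := (p^2+r^2-q^2-s^2)/2 with hD
      set C : ℝ := p*q+r*s with hC
      set ε : ℝ := (p^2+q^2+r^2+s^2)/2 - 1 with hε
      have hεpos : 0 < ε := by rw [hε]; linarith
      set M : ℝ := ‖(D:ℂ) - C*Complex.I‖ * 2
          / ‖Complex.exp ((2*θ:ℝ)*Complex.I) - 1‖ with hM
      clear_value D C ε M
      have hMn : ∀ n : ℕ, (n:ℝ) * ε ≤ M := by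
        intro n
        have hsumle : ∑ k ∈ Finset.range n,
            (D * Real.cos (k*(2*θ)) + C * Real.sin (k*(2*θ))) ≤ (n:ℝ) * (-ε) := by
          calc ∑ k ∈ Finset.range n, (D * Real.cos (k*(2*θ)) + C * Real.sin (k*(2*θ)))
              ≤ ∑ _k ∈ Finset.range n, (-ε) := by
                apply Finset.sum_le_sum
                intro k _
                linarith [key k, hε]
            _ = (n:ℝ) * (-ε) := by
                rw [Finset.sum_const, Finset.card_range]
                simp [nsmul_eq_mul]
        have habs := sum_bound (2*θ) D C hzne n
        have hneg := neg_abs_le (∑ k ∈ Finset.range n,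
            (D * Real.cos (k*(2*θ)) + C * Real.sin (k*(2*θ))))
        linarith [hM.le, hM.ge]
      obtain ⟨n, hn⟩ := exists_nat_gt (M / ε)
      have h1n := hMn n
      have : (n:ℝ) ≤ M / ε := by
        rw [le_div_iff₀ hεpos]
        exact h1n
      linarith
    have hAB2 : p^2+q^2+r^2+s^2 = 2 := le_antisymm hle hge
    have hC2 : (p*q+r*s)^2 ≤ 0 := by
      nlinarith [hid, hAB2, sq_nonneg (p^2+r^2-q^2-s^2)]
    have hC : p*q+r*s = 0 := by
      have := sq_nonneg (p*q+r*s)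
      nlinarith
    have hA1sq : (p^2+r^2-1)^2 = 0 := by
      linear_combination (p^2+r^2) * hAB2 - hid - (p*q+r*s) * hC
    have hA1 : p^2+r^2 = 1 := by
      have := sq_eq_zero_iff.mp hA1sq
      linarith
    have hq : q = -r := by
      linear_combination p*hC - r*hdet - q*hA1
    have hs : s = p := by
      linear_combination r*hC + p*hdet - s*hA1
    set w : ℂ := Complex.mk p r with hw
    have habsw : ‖w‖ = 1 := by
      have h1' : (‖w‖)^2 = p^2 + r^2 := by
        rw [Complex.sq_norm, Complex.normSq_mk]; ring
      nlinarith [norm_nonneg w]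
    have hw0 : w ≠ 0 := by
      intro h0
      rw [h0, norm_zero] at habsw
      norm_num at habsw
    have hcos : Real.cos w.arg = p := by
      rw [Complex.cos_arg hw0, habsw]
      simp [hw]
    have hsn : Real.sin w.arg = r := by
      rw [Complex.sin_arg, habsw]
      simp [hw]
    exact ⟨w.arg, by
      ext i j
      fin_cases i <;> fin_cases j <;> simp [rot, hcos, hsn, hq, hs]⟩
  · rintro ⟨φ, rfl⟩ k
    rw [rot_pow, rot_mul]
    refine ⟨det_rot _, ?_⟩
    rw [rot_mulVec_e1]
    unfold enorm2
    simp only [Matrix.cons_val_zero, Matrix.cons_val_one, Matrix.head_cons]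
    have hone : Real.cos (φ + k*θ)^2 + Real.sin (φ + k*θ)^2 = 1 := by
      rw [add_comm]; exact Real.sin_sq_add_cos_sq _
    rw [hone, Real.sqrt_one]
end
end

section
/- Let s ∈ ℝ² be a unit vector. Then the closure of the convex hull of 𝓜_s (in ℝ^{2×2}) equals {F ∈ ℝ^{2×2} : ‖F s‖ ≤ 1}. -/
open Matrix Real Set MeasureTheory

noncomputable section

lemma enorm2_norm (v : Fin 2 → ℝ) : enorm2 v = ‖(WithLp.equiv 2 (Fin 2 → ℝ)).symm v‖ := by
  rw [EuclideanSpace.norm_eq]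
  simp [Fin.sum_univ_two, enorm2, sq_abs, Real.norm_eq_abs]

def mk2 (s w z : Fin 2 → ℝ) : M2 :=
  !![w 0 * s 0 - z 0 * s 1, w 0 * s 1 + z 0 * s 0;
     w 1 * s 0 - z 1 * s 1, w 1 * s 1 + z 1 * s 0]

lemma mk2_mulVec (s w z : Fin 2 → ℝ) (h1 : s 0 ^ 2 + s 1 ^ 2 = 1) :
    (mk2 s w z).mulVec s = w := by
  funext i
  fin_cases i
  · simp [mk2, Matrix.mulVec, dotProduct, Fin.sum_univ_two]
    linear_combination (w 0) * h1
  · simp [mk2, Matrix.mulVec, dotProduct, Fin.sum_univ_two]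
    linear_combination (w 1) * h1

lemma mk2_det (s w z : Fin 2 → ℝ) (h1 : s 0 ^ 2 + s 1 ^ 2 = 1) :
    (mk2 s w z).det = w 0 * z 1 - w 1 * z 0 := by
  simp [mk2, Matrix.det_fin_two_of]
  linear_combination (w 0 * z 1 - w 1 * z 0) * h1

lemma mk2_surj (s : Fin 2 → ℝ) (h1 : s 0 ^ 2 + s 1 ^ 2 = 1) (F : M2) :
    F = mk2 s (F.mulVec s) (F.mulVec (perp s)) := by
  ext i j
  fin_cases i <;> fin_cases j <;>
    simp [mk2, perp, Matrix.mulVec, dotProduct, Fin.sum_univ_two]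
  · linear_combination (-(F 0 0)) * h1
  · linear_combination (-(F 0 1)) * h1
  · linear_combination (-(F 1 0)) * h1
  · linear_combination (-(F 1 1)) * h1

lemma mk2_comb (s w z w' z' : Fin 2 → ℝ) (a b : ℝ) :
    a • mk2 s w z + b • mk2 s w' z' = mk2 s (a • w + b • w') (a • z + b • z') := by
  ext i j
  fin_cases i <;> fin_cases j <;>
  · simp [mk2, Pi.smul_apply, smul_eq_mul]
    ring


lemma enorm2_nonneg (v : Fin 2 → ℝ) : 0 ≤ enorm2 v := Real.sqrt_nonneg _

lemma enorm2_eq_one (v : Fin 2 → ℝ) (h : v 0 ^ 2 + v 1 ^ 2 = 1) : enorm2 v = 1 := by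
  rw [enorm2, h, Real.sqrt_one]

lemma enorm2_smul (c : ℝ) (hc : 0 ≤ c) (v : Fin 2 → ℝ) : enorm2 (c • v) = c * enorm2 v := by
  simp only [enorm2, Pi.smul_apply, smul_eq_mul, mul_pow]
  rw [show c ^ 2 * v 0 ^ 2 + c ^ 2 * v 1 ^ 2 = c ^ 2 * (v 0 ^ 2 + v 1 ^ 2) by ring,
    Real.sqrt_mul (sq_nonneg c), Real.sqrt_sq hc]

lemma sq_enorm2 (v : Fin 2 → ℝ) : enorm2 v ^ 2 = v 0 ^ 2 + v 1 ^ 2 :=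
  Real.sq_sqrt (by positivity)

lemma mk2_mem_calM (s w z : Fin 2 → ℝ) (h1 : s 0 ^ 2 + s 1 ^ 2 = 1)
    (hw : w 0 ^ 2 + w 1 ^ 2 = 1) (hz : w 0 * z 1 - w 1 * z 0 = 1) :
    mk2 s w z ∈ calM s := by
  refine ⟨?_, ?_⟩
  · rw [mk2_det s w z h1, hz]
  · rw [mk2_mulVec s w z h1]; exact enorm2_eq_one w hw

lemma key (s : Fin 2 → ℝ) (h1 : s 0 ^ 2 + s 1 ^ 2 = 1) (F : M2)
    (hF : enorm2 (F.mulVec s) < 1) : F ∈ convexHull ℝ (calM s) := by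
  set H := convexHull ℝ (calM s) with hHdef
  have hH : Convex ℝ H := convex_convexHull ℝ _
  have step0 : ∀ w z : Fin 2 → ℝ, w 0 ^ 2 + w 1 ^ 2 = 1 →
      w 0 * z 1 - w 1 * z 0 = 1 → mk2 s w z ∈ H :=
    fun w z hw hz => subset_convexHull ℝ _ (mk2_mem_calM s w z h1 hw hz)
  have step1 : ∀ u : Fin 2 → ℝ, u 0 ^ 2 + u 1 ^ 2 = 1 → ∀ r : ℝ,
      mk2 s 0 (r • u) ∈ H := by
    intro u hu r
    have m1 : mk2 s u (perp u + r • u) ∈ H := by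
      apply step0 _ _ hu
      simp only [perp, Pi.add_apply, Pi.smul_apply, smul_eq_mul,
        Matrix.cons_val_zero, Matrix.cons_val_one, Matrix.head_cons]
      linear_combination hu
    have m2 : mk2 s (-u) (-(perp u) + r • u) ∈ H := by
      apply step0
      · simpa using hu
      · simp only [perp, Pi.add_apply, Pi.smul_apply, Pi.neg_apply, smul_eq_mul,
          Matrix.cons_val_zero, Matrix.cons_val_one, Matrix.head_cons]
        linear_combination hu
    have h := hH m1 m2 (by norm_num : (0:ℝ) ≤ 1/2) (by norm_num : (0:ℝ) ≤ 1/2) (by norm_num)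
    rw [mk2_comb] at h
    have ew : (1/2 : ℝ) • u + (1/2 : ℝ) • (-u) = (0 : Fin 2 → ℝ) := by module
    have ez : (1/2 : ℝ) • (perp u + r • u) + (1/2 : ℝ) • (-(perp u) + r • u) = r • u := by
      module
    rwa [ew, ez] at h
  have step2 : ∀ z : Fin 2 → ℝ, mk2 s 0 z ∈ H := by
    intro z
    have m1 : mk2 s 0 ((2 * z 0) • e1) ∈ H := step1 e1 (by simp [e1]) _
    have m2 : mk2 s 0 ((2 * z 1) • e2) ∈ H := step1 e2 (by simp [e2]) _
    have h := hH m1 m2 (by norm_num : (0:ℝ) ≤ 1/2) (by norm_num : (0:ℝ) ≤ 1/2) (by norm_num)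
    rw [mk2_comb] at h
    have ew : (1/2 : ℝ) • (0 : Fin 2 → ℝ) + (1/2 : ℝ) • (0 : Fin 2 → ℝ)
        = (0 : Fin 2 → ℝ) := by module
    have ez : (1/2 : ℝ) • ((2 * z 0) • e1) + (1/2 : ℝ) • ((2 * z 1) • e2) = z := by
      funext i; fin_cases i <;> simp [e1, e2] <;> ring
    rwa [ew, ez] at h
  set w : Fin 2 → ℝ := F.mulVec s with hw
  set z : Fin 2 → ℝ := F.mulVec (perp s) with hz
  have hFeq : F = mk2 s w z := mk2_surj s h1 F
  set a : ℝ := enorm2 w with ha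
  have ha0 : 0 ≤ a := enorm2_nonneg w
  have ha2 : a ^ 2 = w 0 ^ 2 + w 1 ^ 2 := sq_enorm2 w
  rcases eq_or_lt_of_le ha0 with h0 | h0
  · have h00 : w 0 ^ 2 + w 1 ^ 2 = 0 := by rw [← ha2, ← h0]; norm_num
    have hw0 : w = 0 := by
      funext i; fin_cases i
      · show w 0 = 0; nlinarith [sq_nonneg (w 0), sq_nonneg (w 1)]
      · show w 1 = 0; nlinarith [sq_nonneg (w 0), sq_nonneg (w 1)]
    rw [hFeq, hw0]
    exact step2 z
  · have hune : a ≠ 0 := ne_of_gt h0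
    have h1a : (1 : ℝ) - a ≠ 0 := by
      have : a < 1 := hF
      linarith
    set u : Fin 2 → ℝ := a⁻¹ • w with hu
    have hu1 : u 0 ^ 2 + u 1 ^ 2 = 1 := by
      simp only [hu, Pi.smul_apply, smul_eq_mul, mul_pow]
      rw [show a⁻¹ ^ 2 * w 0 ^ 2 + a⁻¹ ^ 2 * w 1 ^ 2 = a⁻¹ ^ 2 * (w 0 ^ 2 + w 1 ^ 2) by ring,
        ← ha2]
      field_simp
    set z2 : Fin 2 → ℝ := (1 - a)⁻¹ • (z - a • perp u) with hz2
    have m1 : mk2 s u (perp u) ∈ H := by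
      apply step0 _ _ hu1
      simp only [perp, Matrix.cons_val_zero, Matrix.cons_val_one, Matrix.head_cons]
      linear_combination hu1
    have m2 : mk2 s 0 z2 ∈ H := step2 z2
    have h := hH m1 m2 ha0 (by linarith [show a < 1 from hF] : (0:ℝ) ≤ 1 - a) (by ring)
    rw [mk2_comb] at h
    have ew : a • u + (1 - a) • (0 : Fin 2 → ℝ) = w := by
      rw [hu, smul_smul, mul_inv_cancel₀ hune, one_smul, smul_zero, add_zero]
    have ez : a • perp u + (1 - a) • z2 = z := by
      rw [hz2, smul_smul, mul_inv_cancel₀ h1a, one_smul, add_sub_cancel]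
    rw [ew, ez] at h
    rwa [hFeq]

lemma enorm2_add_le (v w : Fin 2 → ℝ) : enorm2 (v + w) ≤ enorm2 v + enorm2 w := by
  rw [enorm2_norm, enorm2_norm, enorm2_norm, WithLp.equiv_symm_apply, WithLp.toLp_add]
  exact norm_add_le _ _

lemma enorm2_continuous (s : Fin 2 → ℝ) :
    Continuous fun F : M2 => enorm2 (F.mulVec s) := by
  have hmv : ∀ i, Continuous fun F : M2 => F.mulVec s i := by
    intro i
    simp only [Matrix.mulVec, dotProduct, Fin.sum_univ_two]
    fun_prop
  unfold enorm2
  exact Real.continuous_sqrt.comp (((hmv 0).pow 2).add ((hmv 1).pow 2))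


/-- The closed convex hull of 𝓜_s equals {F : ‖F s‖ ≤ 1}. -/
theorem stmt13 (s : Fin 2 → ℝ) (hs : enorm2 s = 1) :
    closure (convexHull ℝ (calM s)) = {F : M2 | enorm2 (F.mulVec s) ≤ 1} := by
  have h1 : s 0 ^ 2 + s 1 ^ 2 = 1 := by
    have h := Real.sq_sqrt (show (0:ℝ) ≤ s 0 ^ 2 + s 1 ^ 2 by positivity)
    rw [show Real.sqrt (s 0 ^ 2 + s 1 ^ 2) = enorm2 s from rfl, hs] at h
    linarith [h]
  apply Set.Subset.antisymm
  · apply closure_minimal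
    · apply convexHull_min
      · intro F hF
        exact le_of_eq hF.2
      · intro x hx y hy b c hb hc hbc
        show enorm2 ((b • x + c • y).mulVec s) ≤ 1
        rw [Matrix.add_mulVec, Matrix.smul_mulVec, Matrix.smul_mulVec]
        calc enorm2 (b • x.mulVec s + c • y.mulVec s)
            ≤ enorm2 (b • x.mulVec s) + enorm2 (c • y.mulVec s) := enorm2_add_le _ _
          _ = b * enorm2 (x.mulVec s) + c * enorm2 (y.mulVec s) := by
              rw [enorm2_smul b hb, enorm2_smul c hc]
          _ ≤ b * 1 + c * 1 := by
              have := hx; have := hy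
              gcongr
              exacts [hx, hy]
          _ = 1 := by linarith
    · exact isClosed_le (enorm2_continuous s) continuous_const
  · intro F hF
    simp only [Set.mem_setOf_eq] at hF
    have tend : Filter.Tendsto (fun n : ℕ => ((n : ℝ)/((n : ℝ)+1)) • F)
        Filter.atTop (nhds F) := by
      have h := (tendsto_natCast_div_add_atTop (1 : ℝ)).smul_const F
      simpa using h
    apply mem_closure_of_tendsto tend
    filter_upwards with n
    apply key s h1
    have hc0 : (0:ℝ) ≤ (n : ℝ)/((n : ℝ)+1) := by positivity
    have hc1 : (n : ℝ)/((n : ℝ)+1) < 1 := by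
      rw [div_lt_one (by positivity)]
      linarith
    rw [Matrix.smul_mulVec, enorm2_smul _ hc0]
    exact lt_of_le_of_lt (mul_le_of_le_one_right hc0 hF) hc1
end
end
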